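/- For computable ordinals α < β, E_min(α) is strictly below E_min(β) under computable reducibility: E_min(α) ≤_c E_min(β) but E_min(β) is not computably reducible to E_min(α). -/

import Mathlib

/-- The `e`-th computably enumerable set of natural numbers. -/
def Wce (e : ℕ) : Set ℕ :=
  {x | ((Denumerable.ofNat Nat.Partrec.Code e).eval x).Dom}


/-- A computable well-ordering of ℕ. -/
structure CompWO where
  r : ℕ → ℕ → Bool
  comp : Computable₂ r
  wo : IsWellOrder ℕ (fun a b => r a b = true)

/-- `m` is the `A`-least element of `S`. -/
def IsMinOf (A : CompWO) (S : Set ℕ) (m : ℕ) : Prop :=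
  m ∈ S ∧ ∀ x ∈ S, A.r x m = false

/-- The equivalence relation `E_min(A)` on indices of c.e. sets. -/
def Emin (A : CompWO) (e i : ℕ) : Prop :=
  (Wce e = ∅ ∧ Wce i = ∅) ∨ ∃ m, IsMinOf A (Wce e) m ∧ IsMinOf A (Wce i) m

/-- Computable reducibility of binary relations on ℕ. -/
def CompReducible (E F : ℕ → ℕ → Prop) : Prop :=
  ∃ h : ℕ → ℕ, Computable h ∧ ∀ x y, E x y ↔ F (h x) (h y)

/-- The order type of a computable well-ordering. -/
noncomputable def CompWO.otype (A : CompWO) : Ordinal :=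
  @Ordinal.type ℕ (fun a b => A.r a b = true) A.wo

/-- The `A`-rank of an element. -/
noncomputable def CompWO.rank (A : CompWO) (a : ℕ) : Ordinal :=
  @Ordinal.typein ℕ (fun a b => A.r a b = true) A.wo a

/-- The ordinal below ω^ω coded by a list of Cantor normal form coefficients
[c₀, c₁, ..., c_k] ↦ ω^k·c_k + ... + ω·c₁ + c₀. -/
noncomputable def cnfVal (l : List ℕ) : Ordinal :=
  ((l.mapIdx fun (i : ℕ) (c : ℕ) => Ordinal.omega0 ^ i * (c : Ordinal)).reverse).sum

/-- A "strongly computable" well-ordering of ℕ of type at most ω^ω: a computable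
well-ordering together with a computable function giving, for each element, the
Cantor normal form coefficients of its rank. This is the canonical setting in which
E_min(α) is defined. -/
structure StrongCompWO extends CompWO where
  rk : ℕ → List ℕ
  rk_comp : Computable rk
  rk_rank : ∀ a, cnfVal (rk a) = toCompWO.rank a

universe u


theorem cnfVal_nil : cnfVal.{u} [] = 0 := rfl

theorem cnfVal_concat (l : List ℕ) (c : ℕ) :
    cnfVal.{u} (l ++ [c]) = Ordinal.omega0 ^ l.length * c + cnfVal l := by
  unfold cnfVal
  rw [List.mapIdx_append_one, List.reverse_append, List.reverse_singleton,
    List.singleton_append, List.sum_cons]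

theorem cnfVal_lt (l : List ℕ) : cnfVal.{u} l < Ordinal.omega0 ^ l.length := by
  induction l using List.reverseRecOn with
  | nil => simpa [cnfVal_nil] using (Ordinal.opow_pos (0:ℕ) Ordinal.omega0_pos)
  | append_singleton l c ih =>
    rw [cnfVal_concat, List.length_append, List.length_singleton]
    calc Ordinal.omega0 ^ l.length * c + cnfVal l
        < Ordinal.omega0 ^ l.length * c + Ordinal.omega0 ^ l.length := by
          exact (add_lt_add_iff_left _).2 ih
      _ = Ordinal.omega0 ^ l.length * (c + 1) := by rw [mul_add, mul_one]
      _ ≤ Ordinal.omega0 ^ (l.length + 1) := by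
          rw [pow_succ]
          exact mul_le_mul_right (le_of_lt (Ordinal.nat_lt_omega0 (c+1))) _

theorem cnfVal_inj : ∀ {l l' : List ℕ}, l.length = l'.length →
    cnfVal.{u} l = cnfVal.{u} l' → l = l' := by
  intro l
  induction l using List.reverseRecOn with
  | nil => intro l' hl _; exact (List.eq_nil_of_length_eq_zero hl.symm).symm
  | append_singleton l c ih =>
    intro l' hl hv
    induction l' using List.reverseRecOn with
    | nil => simp at hl
    | append_singleton l' c' _ =>
      simp only [List.length_append, List.length_singleton] at hl
      have hll : l.length = l'.length := by omega
      rw [cnfVal_concat, cnfVal_concat, ← hll] at hv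
      have h1 : cnfVal.{u} l < Ordinal.omega0 ^ l.length := cnfVal_lt l
      have h2 : cnfVal.{u} l' < Ordinal.omega0 ^ l.length := hll ▸ cnfVal_lt l'
      have hpow : (Ordinal.omega0 ^ l.length : Ordinal.{u}) ≠ 0 := by
        rw [← Ordinal.opow_natCast]
        exact (Ordinal.opow_pos _ Ordinal.omega0_pos).ne'
      have hc : (c : Ordinal.{u}) = (c' : Ordinal.{u}) := by
        have := congrArg (· / Ordinal.omega0 ^ l.length) hv
        simpa [Ordinal.mul_add_div _ hpow, Ordinal.div_eq_zero_of_lt h1,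
          Ordinal.div_eq_zero_of_lt h2] using this
      have hcc : c = c' := Nat.cast_injective hc
      subst hcc
      have : cnfVal.{u} l = cnfVal.{u} l' := (add_right_inj _).1 hv
      rw [ih hll this]

theorem cnfVal_append_replicate (l : List ℕ) (k : ℕ) :
    cnfVal.{u} (l ++ List.replicate k 0) = cnfVal l := by
  induction k with
  | zero => simp
  | succ k ih =>
    have : (l ++ List.replicate (k+1) 0) = (l ++ List.replicate k 0) ++ [0] := by
      simp [List.replicate_succ' (n := k)]
    rw [this, cnfVal_concat, Nat.cast_zero, mul_zero, zero_add, ih]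

def padz (l : List ℕ) (n : ℕ) : List ℕ := l ++ (List.range (n - l.length)).map (fun _ => 0)

theorem padz_eq (l : List ℕ) (n : ℕ) : padz l n = l ++ List.replicate (n - l.length) 0 := by
  simp [padz, List.map_const']

theorem cnfVal_padz (l : List ℕ) (n : ℕ) : cnfVal.{u} (padz l n) = cnfVal l := by
  rw [padz_eq, cnfVal_append_replicate]

theorem length_padz {l : List ℕ} {n : ℕ} (h : l.length ≤ n) : (padz l n).length = n := by
  rw [padz_eq]; simp; omega

def eqCnf (l l' : List ℕ) : Bool :=
  decide (padz l (max l.length l'.length) = padz l' (max l.length l'.length))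

theorem eqCnf_iff {l l' : List ℕ} : eqCnf l l' = true ↔ cnfVal.{u} l = cnfVal.{u} l' := by
  rw [eqCnf, decide_eq_true_iff]
  constructor
  · intro h
    have := congrArg cnfVal.{u} h
    rwa [cnfVal_padz, cnfVal_padz] at this
  · intro h
    apply cnfVal_inj.{u}
    · rw [length_padz (le_max_left _ _), length_padz (le_max_right _ _)]
    · rwa [cnfVal_padz, cnfVal_padz]

namespace CompWO
variable (A : CompWO)

theorem r_irrefl (a : ℕ) : A.r a a = false := by
  letI := A.wo
  have : ¬ (A.r a a = true) := @irrefl ℕ (fun a b => A.r a b = true) _ a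
  simpa using this

theorem r_total {a b : ℕ} (h : A.r a b = false) (hne : a ≠ b) : A.r b a = true := by
  rcases (haveI := A.wo; trichotomous (r := fun a b : ℕ => A.r a b = true) a b) with h1 | h1 | h1
  · rw [h1] at h; simp at h
  · exact absurd h1 hne
  · exact h1

theorem r_asymm {a b : ℕ} (h : A.r a b = true) : A.r b a = false := by
  have := @Std.Asymm.asymm ℕ (fun a b => A.r a b = true) (by
    letI := A.wo; infer_instance) a b h
  exact Bool.not_eq_true _ ▸ this

theorem exists_min {S : Set ℕ} (hS : S.Nonempty) : ∃ m, IsMinOf A S m := by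
  letI := A.wo
  obtain ⟨m, hm, hmin⟩ :=
    (@IsWellFounded.wf ℕ (fun a b => A.r a b = true) _).has_min S hS
  exact ⟨m, hm, fun x hx => Bool.not_eq_true _ ▸ hmin x hx⟩

theorem min_unique {S : Set ℕ} {m m' : ℕ} (h : IsMinOf A S m) (h' : IsMinOf A S m') :
    m = m' := by
  by_contra hne
  have h1 := h.2 m' h'.1
  have h2 := h'.2 m h.1
  have := A.r_total h2 hne
  rw [this] at h1; exact absurd h1 (by simp)

theorem rank_lt_iff {a b : ℕ} : A.rank a < A.rank b ↔ A.r a b = true :=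
  @Ordinal.typein_lt_typein ℕ (fun a b => A.r a b = true) A.wo a b

theorem rank_inj {a b : ℕ} (h : A.rank a = A.rank b) : a = b :=
  @Ordinal.typein_injective ℕ (fun a b => A.r a b = true) A.wo a b h

theorem rank_lt_otype (a : ℕ) : A.rank a < A.otype :=
  @Ordinal.typein_lt_type ℕ (fun a b => A.r a b = true) A.wo a

theorem exists_rank {o : Ordinal} (h : o < A.otype) : ∃ a, A.rank a = o :=
  @Ordinal.typein_surj ℕ (fun a b => A.r a b = true) A.wo o h

end CompWO

theorem mem_Wce {e x : ℕ} :
    x ∈ Wce e ↔ ∃ s, (Nat.Partrec.Code.evaln s (Denumerable.ofNat Nat.Partrec.Code e) x).isSome := by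
  unfold Wce
  rw [Set.mem_setOf_eq, Part.dom_iff_mem]
  constructor
  · rintro ⟨y, hy⟩
    obtain ⟨s, hs⟩ := Nat.Partrec.Code.evaln_complete.1 hy
    exact ⟨s, by rw [hs]; rfl⟩
  · rintro ⟨s, hs⟩
    obtain ⟨y, hy⟩ := Option.isSome_iff_exists.1 hs
    exact ⟨y, Nat.Partrec.Code.evaln_complete.2 ⟨s, hy⟩⟩

theorem Wce_encode (c : Nat.Partrec.Code) : Wce (Encodable.encode c) = {x | (c.eval x).Dom} := by
  unfold Wce; rw [Denumerable.ofNat_encode]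



theorem primrec_padz : Primrec₂ padz := by
  have h1 : Primrec (fun p : List ℕ × ℕ =>
      (List.range (p.2 - p.1.length)).map (fun _ => (0:ℕ))) :=
    Primrec.list_map
      (Primrec.list_range.comp (Primrec.nat_sub.comp Primrec.snd
        (Primrec.list_length.comp Primrec.fst)))
      (Primrec.const 0).to₂
  exact Primrec.to₂ (Primrec.list_append.comp Primrec.fst h1)

theorem primrec_eqCnf : Primrec₂ eqCnf := by
  unfold eqCnf
  have hm : Primrec₂ (fun (l l' : List ℕ) => max l.length l'.length) :=
    Primrec.to₂ (Primrec.nat_max.comp (Primrec.list_length.comp Primrec.fst)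
      (Primrec.list_length.comp Primrec.snd))
  exact Primrec.to₂ ((Primrec.eq.comp
    (primrec_padz.comp Primrec.fst (hm.comp Primrec.fst Primrec.snd))
    (primrec_padz.comp Primrec.snd (hm.comp Primrec.fst Primrec.snd))).decide)

namespace StrongCompWO
variable (A B : StrongCompWO)

def P (a b : ℕ) : Bool := eqCnf (B.rk b) (A.rk a)

theorem P_iff {a b : ℕ} : P A B a b = true ↔ B.toCompWO.rank b = A.toCompWO.rank a := by
  rw [P, eqCnf_iff, B.rk_rank, A.rk_rank]

theorem P_comp : Computable₂ (P A B) :=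
  (primrec_eqCnf.to_comp).comp (B.rk_comp.comp Computable.snd) (A.rk_comp.comp Computable.fst)

theorem P_total (hle : A.toCompWO.otype ≤ B.toCompWO.otype) (a : ℕ) :
    ∃ b, P A B a b = true := by
  obtain ⟨b, hb⟩ := B.toCompWO.exists_rank (lt_of_lt_of_le (A.toCompWO.rank_lt_otype a) hle)
  exact ⟨b, (P_iff A B).2 hb⟩

noncomputable def tr (hle : A.toCompWO.otype ≤ B.toCompWO.otype) (a : ℕ) : ℕ :=
  Nat.find (P_total A B hle a)

variable (hle : A.toCompWO.otype ≤ B.toCompWO.otype)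

theorem tr_rank (a : ℕ) : B.toCompWO.rank (tr A B hle a) = A.toCompWO.rank a :=
  (P_iff A B).1 (Nat.find_spec (P_total A B hle a))

theorem tr_inj {a a' : ℕ} (h : tr A B hle a = tr A B hle a') : a = a' := by
  apply A.toCompWO.rank_inj
  rw [← tr_rank A B hle a, ← tr_rank A B hle a', h]

theorem tr_comp : Computable (tr A B hle) := by
  have hp : Partrec₂ (fun a n => (Part.some (P A B a n) : Part Bool)) :=
    Computable₂.partrec₂ (P_comp A B)
  have h := Partrec.rfind hp
  apply Partrec.of_eq h
  intro a
  apply Part.eq_some_iff.2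
  apply Nat.mem_rfind.2
  constructor
  · simp [Nat.find_spec (P_total A B hle a), tr]
  · intro m hm
    have h2 : ¬ (P A B a m = true) := Nat.find_min (P_total A B hle a) hm
    simp only [Part.mem_some_iff]
    exact (Bool.not_eq_true _ ▸ h2).symm

end StrongCompWO

open Nat.Partrec (Code)
open Nat.Partrec.Code

namespace StrongCompWO
variable (A B : StrongCompWO) (hle : A.toCompWO.otype ≤ B.toCompWO.otype)

noncomputable def redG (hle : A.toCompWO.otype ≤ B.toCompWO.otype) (p n : ℕ) : Option ℕ :=
  cond (cond (decide (tr A B hle n.unpair.1 = p.unpair.2))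
      ((evaln n.unpair.2 (Denumerable.ofNat Code p.unpair.1) n.unpair.1).isSome) false)
    (Option.some 0) Option.none

theorem redG_isSome {p n : ℕ} : (redG A B hle p n).isSome = true ↔
    (tr A B hle n.unpair.1 = p.unpair.2 ∧
      (evaln n.unpair.2 (Denumerable.ofNat Code p.unpair.1) n.unpair.1).isSome) := by
  unfold redG
  by_cases h1 : tr A B hle n.unpair.1 = p.unpair.2 <;>
    cases h2 : (evaln n.unpair.2 (Denumerable.ofNat Code p.unpair.1) n.unpair.1).isSome <;>
      simp [h1, h2]

theorem redG_comp : Computable₂ (redG A B hle) := by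
  have hu1 : Primrec (fun n : ℕ => n.unpair.1) := Primrec.fst.comp Primrec.unpair
  have hu2 : Primrec (fun n : ℕ => n.unpair.2) := Primrec.snd.comp Primrec.unpair
  have ht : Computable (fun q : ℕ × ℕ => decide (tr A B hle q.2.unpair.1 = q.1.unpair.2)) := by
    have := (Primrec.eq (α := ℕ)).decide.to_comp.comp
      ((tr_comp A B hle).comp (hu1.to_comp.comp Computable.snd))
      (hu2.to_comp.comp Computable.fst)
    exact this
  have he : Primrec (fun q : ℕ × ℕ =>
      (evaln q.2.unpair.2 (Denumerable.ofNat Code q.1.unpair.1) q.2.unpair.1).isSome) := by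
    have h3 : Primrec (fun q : ℕ × ℕ =>
        evaln q.2.unpair.2 (Denumerable.ofNat Code q.1.unpair.1) q.2.unpair.1) :=
      primrec_evaln.comp
        (((hu2.comp Primrec.snd).pair
          ((Primrec.ofNat Code).comp (hu1.comp Primrec.fst))).pair
          (hu1.comp Primrec.snd))
    exact Primrec.option_isSome.comp h3
  have hb : Computable (fun q : ℕ × ℕ =>
      (cond (decide (tr A B hle q.2.unpair.1 = q.1.unpair.2))
        ((evaln q.2.unpair.2 (Denumerable.ofNat Code q.1.unpair.1) q.2.unpair.1).isSome)
        false : Bool)) := Computable.cond ht he.to_comp (Computable.const false)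
  exact Computable.cond hb (Computable.const (Option.some 0)) (Computable.const Option.none)

theorem exists_hred : ∃ hfun : ℕ → ℕ, Computable hfun ∧
    ∀ e, Wce (hfun e) = {y | ∃ a ∈ Wce e, tr A B hle a = y} := by
  have hF : Partrec (fun p => Nat.rfindOpt (redG A B hle p)) :=
    Partrec.rfindOpt (redG_comp A B hle)
  obtain ⟨cF, hcF⟩ := exists_code.1 (Partrec.nat_iff.1 hF)
  refine ⟨fun e => Encodable.encode (cF.curry e), ?_, ?_⟩
  · exact (Primrec.encode.comp (primrec₂_curry.comp (Primrec.const cF) Primrec.id)).to_comp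
  · intro e
    ext x
    have hWh : x ∈ Wce (Encodable.encode (cF.curry e)) ↔
        (Nat.rfindOpt (redG A B hle (Nat.pair e x))).Dom := by
      unfold Wce
      rw [Set.mem_setOf_eq, Denumerable.ofNat_encode, eval_curry, hcF]
    rw [Set.mem_setOf_eq, hWh, Part.dom_iff_mem]
    constructor
    · rintro ⟨y, hy⟩
      obtain ⟨n, hn⟩ := Nat.rfindOpt_spec hy
      have : (redG A B hle (Nat.pair e x) n).isSome := by
        rw [hn]; rfl
      rw [redG_isSome] at this
      obtain ⟨h1, h2⟩ := this
      refine ⟨n.unpair.1, ?_, ?_⟩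
      · rw [mem_Wce]
        exact ⟨n.unpair.2, by simpa [Nat.unpair_pair] using h2⟩
      · simpa [Nat.unpair_pair] using h1
    · rintro ⟨a, ha, hta⟩
      rw [mem_Wce] at ha
      obtain ⟨s, hs⟩ := ha
      have : (redG A B hle (Nat.pair e x) (Nat.pair a s)).isSome := by
        rw [redG_isSome]
        simp only [Nat.unpair_pair]
        exact ⟨hta, hs⟩
      obtain ⟨y, hy⟩ := Option.isSome_iff_exists.1 this
      have := Nat.rfindOpt_dom.2 ⟨Nat.pair a s, y, hy⟩
      exact ⟨(Nat.rfindOpt (redG A B hle (Nat.pair e x))).get this, Part.get_mem this⟩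

end StrongCompWO

namespace StrongCompWO
variable (A B : StrongCompWO)

theorem tr_min (hle : A.toCompWO.otype ≤ B.toCompWO.otype)
    {S : Set ℕ} {m : ℕ} (hm : IsMinOf A.toCompWO S m) :
    IsMinOf B.toCompWO {y | ∃ a ∈ S, tr A B hle a = y} (tr A B hle m) := by
  constructor
  · exact ⟨m, hm.1, rfl⟩
  · rintro y ⟨a, ha, rfl⟩
    by_contra hcon
    have h1 : B.toCompWO.r (tr A B hle a) (tr A B hle m) = true := by
      cases h2 : B.toCompWO.r (tr A B hle a) (tr A B hle m)
      · exact absurd h2 hcon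
      · rfl
    have h2 : B.toCompWO.rank (tr A B hle a) < B.toCompWO.rank (tr A B hle m) :=
      (B.toCompWO.rank_lt_iff).2 h1
    rw [tr_rank, tr_rank] at h2
    have h3 : A.toCompWO.r a m = true := (A.toCompWO.rank_lt_iff).1 h2
    rw [hm.2 a ha] at h3
    exact absurd h3 (by simp)

theorem pos_red (hle : A.toCompWO.otype ≤ B.toCompWO.otype) :
    CompReducible (Emin A.toCompWO) (Emin B.toCompWO) := by
  obtain ⟨hfun, hcomp, hWce⟩ := exists_hred A B hle
  refine ⟨hfun, hcomp, fun e i => ?_⟩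
  constructor
  · rintro (⟨he, hi⟩ | ⟨m, h1, h2⟩)
    · left
      rw [hWce, hWce, he, hi]
      constructor <;> · ext y; simp
    · right
      refine ⟨tr A B hle m, ?_, ?_⟩
      · rw [hWce]; exact tr_min A B hle h1
      · rw [hWce]; exact tr_min A B hle h2
  · rintro (⟨he, hi⟩ | ⟨μ, H1, H2⟩)
    · left
      rw [hWce] at he; rw [hWce] at hi
      constructor
      · ext a
        simp only [Set.mem_empty_iff_false, iff_false]
        intro ha
        have : tr A B hle a ∈ (∅ : Set ℕ) := he ▸ ⟨a, ha, rfl⟩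
        exact this
      · ext a
        simp only [Set.mem_empty_iff_false, iff_false]
        intro ha
        have : tr A B hle a ∈ (∅ : Set ℕ) := hi ▸ ⟨a, ha, rfl⟩
        exact this
    · rw [hWce] at H1; rw [hWce] at H2
      have hne : (Wce e).Nonempty := by
        obtain ⟨a, ha, -⟩ := H1.1
        exact ⟨a, ha⟩
      have hni : (Wce i).Nonempty := by
        obtain ⟨a, ha, -⟩ := H2.1
        exact ⟨a, ha⟩
      obtain ⟨me, hme⟩ := A.toCompWO.exists_min hne
      obtain ⟨mi, hmi⟩ := A.toCompWO.exists_min hni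
      have he1 : tr A B hle me = μ :=
        B.toCompWO.min_unique (tr_min A B hle hme) H1
      have hi1 : tr A B hle mi = μ :=
        B.toCompWO.min_unique (tr_min A B hle hmi) H2
      have : me = mi := tr_inj A B hle (he1.trans hi1.symm)
      subst this
      exact Or.inr ⟨me, hme, hmi⟩

end StrongCompWO

section NegDir
open Nat.Partrec (Code)
open Nat.Partrec.Code

theorem exists_empty_idx : ∃ e, Wce e = ∅ := by
  obtain ⟨c, hc⟩ := exists_code.1 (Partrec.nat_iff.1 (@Partrec.none ℕ ℕ _ _))
  refine ⟨Encodable.encode c, ?_⟩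
  rw [Wce_encode, hc]
  ext x; simp [Part.not_none_dom]

theorem exists_singleton_idx (m : ℕ) : ∃ e, Wce e = {m} := by
  have hp : Partrec (fun x : ℕ => cond (decide (x = m)) (Part.some 0) (Part.none : Part ℕ)) := by
    refine Partrec.cond ?_ (Partrec.const' _) Partrec.none
    exact (Primrec.eq.comp Primrec.id (Primrec.const m)).decide.to_comp
  obtain ⟨c, hc⟩ := exists_code.1 (Partrec.nat_iff.1 hp)
  refine ⟨Encodable.encode c, ?_⟩
  rw [Wce_encode, hc]
  ext x
  by_cases hx : x = m <;> simp [hx, Part.not_none_dom]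

theorem isMinOf_singleton (C : CompWO) (m : ℕ) : IsMinOf C {m} m := by
  refine ⟨rfl, fun x hx => ?_⟩
  rw [Set.mem_singleton_iff] at hx
  rw [hx]
  exact C.r_irrefl m

set_option maxHeartbeats 1600000 in
theorem neg_red (A B : StrongCompWO) (hlt : A.toCompWO.otype < B.toCompWO.otype) :
    ¬ CompReducible (Emin B.toCompWO) (Emin A.toCompWO) := by
  rintro ⟨h, hcomp, hiff⟩
  obtain ⟨eE, hE⟩ := exists_empty_idx
  have hidx := fun m => Classical.choose_spec (exists_singleton_idx m)
  set idx : ℕ → ℕ := fun m => Classical.choose (exists_singleton_idx m) with hidxdef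
  -- Step A : the image of each singleton class is nonempty
  have stepA : ∀ m, (Wce (h (idx m))).Nonempty := by
    intro m
    by_contra hcon
    have hempty : Wce (h (idx m)) = ∅ := Set.not_nonempty_iff_eq_empty.1 hcon
    by_cases hbase : Wce (h eE) = ∅
    · have hEA : Emin A.toCompWO (h eE) (h (idx m)) := Or.inl ⟨hbase, hempty⟩
      rcases (hiff eE (idx m)).2 hEA with ⟨-, h2⟩ | ⟨μ, hμ, -⟩
      · rw [hidx m] at h2
        exact absurd h2 (by simp)
      · rw [hE] at hμ
        exact hμ.1
    · -- fixed point: W_e = {m} as soon as W_{h e} is nonempty, else ∅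
      set f : Code → ℕ →. ℕ := fun c x =>
        cond (decide (x = m))
          (Nat.rfindOpt fun n =>
            cond ((evaln n.unpair.2
              (Denumerable.ofNat Code (h (Encodable.encode c))) n.unpair.1).isSome)
              (Option.some 0) Option.none)
          Part.none with hfdef
      have hf : Partrec₂ f := by
        apply Partrec.cond
        · exact (Primrec.eq.comp Primrec.id (Primrec.const m)).decide.to_comp.comp Computable.snd
        · apply Partrec.rfindOpt
          have hcode : Computable (fun q : (Code × ℕ) × ℕ =>
              Denumerable.ofNat Code (h (Encodable.encode q.1.1))) :=
            (Computable.ofNat Code).comp (hcomp.comp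
              (Computable.encode.comp (Computable.fst.comp Computable.fst)))
          have hev : Computable (fun q : (Code × ℕ) × ℕ =>
              (evaln q.2.unpair.2 (Denumerable.ofNat Code (h (Encodable.encode q.1.1)))
                q.2.unpair.1).isSome) := by
            refine (Primrec.option_isSome.to_comp).comp ?_
            exact primrec_evaln.to_comp.comp
              ((((Primrec.snd.comp Primrec.unpair).comp Primrec.snd).to_comp.pair hcode).pair
                ((Primrec.fst.comp Primrec.unpair).comp Primrec.snd).to_comp)
          exact Computable.cond hev (Computable.const (Option.some 0))
            (Computable.const Option.none)
        · exact Partrec.none.comp Computable.fst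
      obtain ⟨c₀, hc₀⟩ := fixed_point₂ hf
      set e := Encodable.encode c₀ with hedef
      have hWe : ∀ x, x ∈ Wce e ↔
          (x = m ∧ (Wce (h e)).Nonempty) := by
        intro x
        rw [hedef, Wce_encode, Set.mem_setOf_eq, hc₀, hfdef]
        by_cases hx : x = m
        · simp only [hx, decide_true, cond_true]
          rw [Part.dom_iff_mem]
          constructor
          · rintro ⟨y, hy⟩
            obtain ⟨n, hn⟩ := Nat.rfindOpt_spec hy
            by_cases hev : (evaln n.unpair.2
                (Denumerable.ofNat Code (h (Encodable.encode c₀))) n.unpair.1).isSome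
            · refine ⟨trivial, n.unpair.1, ?_⟩
              rw [mem_Wce]
              exact ⟨n.unpair.2, hev⟩
            · rw [Bool.not_eq_true] at hev
              rw [hev] at hn
              simp at hn
          · rintro ⟨-, z, hz⟩
            rw [mem_Wce] at hz
            obtain ⟨s, hs⟩ := hz
            have hd : (Nat.rfindOpt fun n =>
                cond ((evaln n.unpair.2
                  (Denumerable.ofNat Code (h (Encodable.encode c₀))) n.unpair.1).isSome)
                  (Option.some 0) Option.none).Dom :=
              Nat.rfindOpt_dom.2 ⟨Nat.pair z s, 0, by
                simp only [Nat.unpair_pair, hs, cond_true, Option.mem_def]⟩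
            exact ⟨_, Part.get_mem hd⟩
        · simp [hx, Part.not_none_dom]
      by_cases hne : (Wce (h e)).Nonempty
      · have hWe' : Wce e = {m} := by
          ext x; rw [hWe x, Set.mem_singleton_iff]
          exact ⟨fun h => h.1, fun h => ⟨h, hne⟩⟩
        have hBB : Emin B.toCompWO e (idx m) := by
          refine Or.inr ⟨m, ?_, ?_⟩
          · rw [hWe']; exact isMinOf_singleton _ m
          · rw [hidx m]; exact isMinOf_singleton _ m
        rcases (hiff e (idx m)).1 hBB with ⟨h1, -⟩ | ⟨μ, -, hμ2⟩
        · rw [h1] at hne; exact absurd hne (by simp [Set.not_nonempty_empty])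
        · rw [hempty] at hμ2; exact hμ2.1
      · have hWe' : Wce e = ∅ := by
          ext x
          simp only [Set.mem_empty_iff_false, iff_false]
          intro hx
          exact hne ((hWe x).1 hx).2
        have hBB : Emin B.toCompWO e eE := Or.inl ⟨hWe', hE⟩
        rcases (hiff e eE).1 hBB with ⟨-, h2⟩ | ⟨μ, hμ, -⟩
        · exact hbase h2
        · rw [hWe'] at *
          exact hne ⟨μ, hμ.1⟩
  -- Step B : choose the A-least element of each image
  have hg := fun m => Classical.choose_spec (A.toCompWO.exists_min (stepA m))
  set g : ℕ → ℕ := fun m => Classical.choose (A.toCompWO.exists_min (stepA m)) with hgdef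
  -- Step C : g is strictly monotone from B to A
  have stepC : ∀ m n, B.r n m = true → A.r (g n) (g m) = true := by
    intro m n hnm
    have hnem : n ≠ m := by
      intro hcon
      rw [hcon] at hnm
      rw [B.toCompWO.r_irrefl m] at hnm
      exact absurd hnm (by simp)
    set f : Code → ℕ →. ℕ := fun c x =>
      cond (decide (x = m)) (Part.some 0)
        (cond (decide (x = n))
          ((eval (Denumerable.ofNat Code (h (Encodable.encode c))) (g m)).map fun _ => 0)
          Part.none) with hfdef
    have hcode : Computable (fun p : Code × ℕ =>
        Denumerable.ofNat Code (h (Encodable.encode p.1))) :=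
      (Computable.ofNat Code).comp (hcomp.comp (Computable.encode.comp Computable.fst))
    have hf : Partrec₂ f := by
      apply Partrec.cond
      · exact (Primrec.eq.comp Primrec.id (Primrec.const m)).decide.to_comp.comp Computable.snd
      · exact Partrec.const' _
      · apply Partrec.cond
        · exact (Primrec.eq.comp Primrec.id (Primrec.const n)).decide.to_comp.comp Computable.snd
        · exact Partrec.map (eval_part.comp hcode (Computable.const (g m)))
            (Computable.const 0).to₂
        · exact Partrec.none.comp Computable.fst
    obtain ⟨c₀, hc₀⟩ := fixed_point₂ hf
    set e := Encodable.encode c₀ with hedef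
    have hgmWhe : (g m ∈ Wce (h e)) ↔
        ((Denumerable.ofNat Code (h (Encodable.encode c₀))).eval (g m)).Dom := Iff.rfl
    have hWe : ∀ x, x ∈ Wce e ↔ (x = m ∨ (x = n ∧ g m ∈ Wce (h e))) := by
      intro x
      rw [hedef, Wce_encode, Set.mem_setOf_eq, hc₀, hfdef]
      by_cases hx : x = m
      · simp [hx]
      · by_cases hx' : x = n
        · simp only [hx', decide_eq_false hnem, decide_true, cond_false, cond_true]
          rw [Part.dom_iff_mem]
          constructor
          · rintro ⟨y, hy⟩
            obtain ⟨z, hz, -⟩ := (Part.mem_map_iff _).1 hy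
            exact Or.inr ⟨trivial, hgmWhe.2 (Part.dom_iff_mem.2 ⟨z, hz⟩)⟩
          · rintro (hcon | ⟨-, hmem⟩)
            · exact absurd hcon hnem
            · obtain ⟨z, hz⟩ := Part.dom_iff_mem.1 (hgmWhe.1 hmem)
              exact ⟨0, (Part.mem_map_iff _).2 ⟨z, hz, rfl⟩⟩
        · simp [hx, hx', Part.not_none_dom]
    by_cases hgm : g m ∈ Wce (h e)
    · -- W_e = {m, n}, B-least element n
      have hWe' : ∀ x, x ∈ Wce e ↔ (x = m ∨ x = n) := by
        intro x
        rw [hWe x]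
        exact ⟨fun hc => hc.imp id And.left, fun hc => hc.imp id (fun hx => ⟨hx, hgm⟩)⟩
      have hminWe : IsMinOf B.toCompWO (Wce e) n := by
        refine ⟨(hWe' n).2 (Or.inr rfl), fun x hx => ?_⟩
        rcases (hWe' x).1 hx with hx' | hx'
        · rw [hx']
          exact B.toCompWO.r_asymm hnm
        · rw [hx']
          exact B.toCompWO.r_irrefl n
      have hBB : Emin B.toCompWO e (idx n) := by
        refine Or.inr ⟨n, hminWe, ?_⟩
        rw [hidx n]
        exact isMinOf_singleton _ n
      rcases (hiff e (idx n)).1 hBB with ⟨h1, -⟩ | ⟨μ, hμ1, hμ2⟩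
      · rw [h1] at hgm
        exact absurd hgm (by simp)
      · have hμgn : μ = g n := by
          apply A.toCompWO.min_unique hμ2
          exact hg n
        rw [hμgn] at hμ1
        have hfalse : A.r (g m) (g n) = false := hμ1.2 (g m) hgm
        have hne2 : g n ≠ g m := by
          intro hcon
          have hAA : Emin A.toCompWO (h (idx m)) (h (idx n)) := by
            refine Or.inr ⟨g m, hg m, ?_⟩
            rw [← hcon]
            exact hg n
          rcases (hiff (idx m) (idx n)).2 hAA with ⟨h1, -⟩ | ⟨ν, hν1, hν2⟩
          · rw [hidx m] at h1
            exact absurd h1 (by simp)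
          · have hν1' : ν = m := by
              have := hν1.1
              rwa [hidx m, Set.mem_singleton_iff] at this
            have hν2' : ν = n := by
              have := hν2.1
              rwa [hidx n, Set.mem_singleton_iff] at this
            exact hnem (hν2' ▸ hν1' ▸ rfl)
        exact A.toCompWO.r_total hfalse (fun hc => hne2 hc.symm)
    · -- W_e = {m} : contradiction, since then g m must appear in W_{h e}
      exfalso
      have hWe' : Wce e = {m} := by
        ext x
        rw [hWe x, Set.mem_singleton_iff]
        constructor
        · rintro (hx | ⟨-, hmem⟩)
          · exact hx
          · exact absurd hmem hgm
        · exact Or.inl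
      have hBB : Emin B.toCompWO e (idx m) := by
        refine Or.inr ⟨m, ?_, ?_⟩
        · rw [hWe']; exact isMinOf_singleton _ m
        · rw [hidx m]; exact isMinOf_singleton _ m
      rcases (hiff e (idx m)).1 hBB with ⟨-, h2⟩ | ⟨μ, hμ1, hμ2⟩
      · obtain ⟨z, hz⟩ := stepA m
        rw [h2] at hz
        exact hz
      · have hμgm : μ = g m := A.toCompWO.min_unique hμ2 (hg m)
        rw [hμgm] at hμ1
        exact hgm hμ1.1
  -- Step D : the embedding gives B.otype ≤ A.otype, contradiction
  letI iA := A.wo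
  letI iB := B.wo
  have emb : (fun a b => B.r a b = true) ↪r (fun a b => A.r a b = true) :=
    RelEmbedding.ofMonotone g (fun a b hab => stepC b a hab)
  have hle2 : B.toCompWO.otype ≤ A.toCompWO.otype := emb.ordinal_type_le
  exact absurd hle2 (not_le.2 hlt)

end NegDir

/-- For (strongly computable presentations of) ordinals α < β, E_min(α) is strictly
below E_min(β): E_min(α) reduces to E_min(β) but not conversely. -/
theorem stmt9 (A B : StrongCompWO) (h : A.toCompWO.otype < B.toCompWO.otype) :
    CompReducible (Emin A.toCompWO) (Emin B.toCompWO) ∧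
    ¬ CompReducible (Emin B.toCompWO) (Emin A.toCompWO) :=
  ⟨StrongCompWO.pos_red A B h.le, neg_red A B h⟩
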